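/- Single-step SGD recursion (established in the proof of Lemma B.3). Let E be a real Hilbert space and F : E → ℝ differentiable with S-Lipschitz gradient, where S > 0. Let τ ≥ 1 be an integer and 0 ≤ η ≤ 1/(√6·S·τ). Let x, y ∈ E and let g be an E-valued random variable on a probability space with 𝔼[g] = ∇F(x) and 𝔼[‖g − ∇F(x)‖²] ≤ σ². If moreover ‖∇F(y)‖² ≤ σ² + G², then 𝔼[‖(x − η·g) − y‖²] ≤ (1 + 2/τ)·‖x − y‖² + 6τη²·(2σ² + G²). -/

import Mathlib

open MeasureTheory
open scoped RealInnerProductSpace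

set_option maxHeartbeats 1000000 in
theorem stmt_5_aux (t η S A B D N I1 I2 M σ G : ℝ)
    (ht : 1 ≤ t) (hη0 : 0 ≤ η) (hS : 0 < S)
    (hA : 0 ≤ A) (hB : 0 ≤ B) (hD0 : 0 ≤ D) (hN0 : 0 ≤ N)
    (hD : D ≤ S * A) (hB2 : B ^ 2 ≤ σ ^ 2 + G ^ 2)
    (h1 : -I1 ≤ A * D) (h2 : -I2 ≤ A * B)
    (hN : N ≤ D + B) (hM : M ≤ σ ^ 2 + N ^ 2)
    (k1 : 2 * (η * S * t) ≤ 1) (k2 : 6 * (η ^ 2 * S ^ 2 * t ^ 2) ≤ 1) :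
    A ^ 2 - 2 * η * (I1 + I2) + η ^ 2 * M ≤
      (1 + 2 / t) * A ^ 2 + 6 * t * η ^ 2 * (2 * σ ^ 2 + G ^ 2) := by
  have ht0 : (0:ℝ) < t := lt_of_lt_of_le one_pos ht
  rw [← mul_le_mul_iff_right₀ ht0]
  have hRHS : t * ((1 + 2 / t) * A ^ 2 + 6 * t * η ^ 2 * (2 * σ ^ 2 + G ^ 2))
      = (t + 2) * A ^ 2 + 6 * t ^ 2 * η ^ 2 * (2 * σ ^ 2 + G ^ 2) := by
    field_simp
  rw [hRHS]
  have hη2 : (0:ℝ) ≤ η ^ 2 := sq_nonneg η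
  have p1 : t * (-(2 * η * (I1 + I2))) ≤ t * (2 * η * (A * D)) + t * (2 * η * (A * B)) := by
    nlinarith [mul_le_mul_of_nonneg_left h1 (by positivity : (0:ℝ) ≤ 2 * t * η),
      mul_le_mul_of_nonneg_left h2 (by positivity : (0:ℝ) ≤ 2 * t * η)]
  have p2 : t * (2 * η * (A * D)) ≤ A ^ 2 := by
    nlinarith [mul_le_mul_of_nonneg_left hD (by positivity : (0:ℝ) ≤ 2 * η * t * A),
      mul_le_mul_of_nonneg_right k1 (sq_nonneg A)]
  have p3 : t * (2 * η * (A * B)) ≤ A ^ 2 / 2 + 2 * t ^ 2 * η ^ 2 * B ^ 2 := by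
    nlinarith [sq_nonneg (A - 2 * t * η * B)]
  have p4 : t * (η ^ 2 * N ^ 2) ≤ A ^ 2 / 3 + 2 * t * η ^ 2 * B ^ 2 := by
    have h0 : N ^ 2 ≤ (D + B) ^ 2 := by nlinarith
    have h1' : N ^ 2 ≤ 2 * D ^ 2 + 2 * B ^ 2 := by nlinarith [sq_nonneg (D - B)]
    have h2' : t * (η ^ 2 * (2 * D ^ 2)) ≤ A ^ 2 / 3 := by
      have hD2 : D ^ 2 ≤ S ^ 2 * A ^ 2 := by nlinarith
      nlinarith [mul_le_mul_of_nonneg_right k2 (sq_nonneg A),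
        mul_le_mul_of_nonneg_left hD2 (by positivity : (0:ℝ) ≤ 2 * t * η ^ 2),
        mul_pos ht0 ht0, sq_nonneg (S * A * η * t),
        mul_le_mul_of_nonneg_left
          (mul_le_mul_of_nonneg_left hD2 (by positivity : (0:ℝ) ≤ 2 * η ^ 2)) ht0.le]
    nlinarith [mul_le_mul_of_nonneg_left h1' (by positivity : (0:ℝ) ≤ t * η ^ 2)]
  have hMle : t * (η ^ 2 * M) ≤ t * η ^ 2 * σ ^ 2 + t * (η ^ 2 * N ^ 2) := by
    nlinarith [mul_le_mul_of_nonneg_left hM (by positivity : (0:ℝ) ≤ t * η ^ 2)]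
  have hBfin : 2 * t ^ 2 * η ^ 2 * B ^ 2 + 2 * t * η ^ 2 * B ^ 2 + t * η ^ 2 * σ ^ 2
      ≤ 6 * t ^ 2 * η ^ 2 * (2 * σ ^ 2 + G ^ 2) := by
    have htt : t ≤ t ^ 2 := by nlinarith
    have e1 : t * (η ^ 2 * B ^ 2) ≤ t ^ 2 * (η ^ 2 * B ^ 2) :=
      mul_le_mul_of_nonneg_right htt (by positivity)
    have e2 : t * (η ^ 2 * σ ^ 2) ≤ t ^ 2 * (η ^ 2 * σ ^ 2) :=
      mul_le_mul_of_nonneg_right htt (by positivity)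
    have e3 : 4 * t ^ 2 * η ^ 2 * B ^ 2 ≤ 4 * t ^ 2 * η ^ 2 * (σ ^ 2 + G ^ 2) :=
      mul_le_mul_of_nonneg_left hB2 (by positivity)
    nlinarith [e1, e2, e3, mul_nonneg (mul_nonneg (sq_nonneg t) hη2) (sq_nonneg σ),
      mul_nonneg (mul_nonneg (sq_nonneg t) hη2) (sq_nonneg G)]
  nlinarith [p1, p2, p3, p4, hMle, hBfin, sq_nonneg A, mul_pos ht0 ht0]

/-- Single-step SGD recursion (proof of Lemma B.3). -/
theorem stmt_5 {E : Type*} [NormedAddCommGroup E] [InnerProductSpace ℝ E] [CompleteSpace E]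
    {Ω : Type*} [MeasurableSpace Ω] (μ : Measure Ω) [IsProbabilityMeasure μ]
    (F : E → ℝ) (S : ℝ) (hS : 0 < S)
    (hdiff : Differentiable ℝ F)
    (hlip : ∀ a b : E, ‖gradient F a - gradient F b‖ ≤ S * ‖a - b‖)
    (τ : ℕ) (hτ : 1 ≤ τ) (η : ℝ) (hη0 : 0 ≤ η) (hη : η ≤ 1 / (Real.sqrt 6 * S * τ))
    (x y : E) (g : Ω → E) (hg2 : MemLp g 2 μ)
    (σ G : ℝ)
    (hmean : ∫ ω, g ω ∂μ = gradient F x)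
    (hvar : ∫ ω, ‖g ω - gradient F x‖ ^ 2 ∂μ ≤ σ ^ 2)
    (hy : ‖gradient F y‖ ^ 2 ≤ σ ^ 2 + G ^ 2) :
    ∫ ω, ‖(x - η • g ω) - y‖ ^ 2 ∂μ ≤
      (1 + 2 / (τ : ℝ)) * ‖x - y‖ ^ 2 + 6 * τ * η ^ 2 * (2 * σ ^ 2 + G ^ 2) := by
  have ht1 : (1:ℝ) ≤ (τ:ℝ) := by exact_mod_cast hτ
  have ht0 : (0:ℝ) < (τ:ℝ) := lt_of_lt_of_le one_pos ht1
  set a := gradient F x with ha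
  set b := gradient F y with hb
  -- integrability facts
  have hgint : Integrable g μ := hg2.integrable one_le_two
  have hsq : Integrable (fun ω => ‖g ω‖ ^ 2) μ :=
    (memLp_two_iff_integrable_sq_norm hg2.1).mp hg2
  have hinner : Integrable (fun ω => ⟪x - y, g ω⟫) μ := hgint.const_inner _
  -- pointwise expansion
  have hpt : ∀ ω, ‖(x - η • g ω) - y‖ ^ 2
      = ‖x - y‖ ^ 2 - 2 * η * ⟪x - y, g ω⟫ + η ^ 2 * ‖g ω‖ ^ 2 := by
    intro ω
    have h1 : (x - η • g ω) - y = (x - y) - η • g ω := by abel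
    rw [h1, norm_sub_sq_real, real_inner_smul_right, norm_smul, mul_pow, Real.norm_eq_abs,
      sq_abs]
    ring
  have hi1 : Integrable (fun ω => ‖x - y‖ ^ 2 - 2 * η * ⟪x - y, g ω⟫) μ :=
    (integrable_const _).sub (hinner.const_mul _)
  have hi2 : Integrable (fun ω => η ^ 2 * ‖g ω‖ ^ 2) μ := hsq.const_mul _
  have hi3 : Integrable (fun ω => 2 * η * ⟪x - y, g ω⟫) μ := hinner.const_mul _
  have hIeq : ∫ ω, ‖(x - η • g ω) - y‖ ^ 2 ∂μ
      = ‖x - y‖ ^ 2 - 2 * η * ⟪x - y, a⟫ + η ^ 2 * ∫ ω, ‖g ω‖ ^ 2 ∂μ := by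
    simp_rw [hpt]
    rw [integral_add hi1 hi2, integral_sub (integrable_const _) hi3, integral_const_mul _ _,
      integral_const_mul _ _, integral_inner hgint, hmean, integral_const, probReal_univ]
    simp
  -- second moment decomposition
  have hgaint : Integrable (fun ω => g ω - a) μ := hgint.sub (integrable_const a)
  have hmom : ∫ ω, ‖g ω‖ ^ 2 ∂μ ≤ σ ^ 2 + ‖a‖ ^ 2 := by
    have hpt2 : ∀ ω, ‖g ω‖ ^ 2 = ‖g ω - a‖ ^ 2 + 2 * ⟪a, g ω - a⟫ + ‖a‖ ^ 2 := by
      intro ω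
      calc ‖g ω‖ ^ 2 = ‖(g ω - a) + a‖ ^ 2 := by rw [sub_add_cancel]
        _ = ‖g ω - a‖ ^ 2 + 2 * ⟪g ω - a, a⟫ + ‖a‖ ^ 2 := norm_add_sq_real _ _
        _ = ‖g ω - a‖ ^ 2 + 2 * ⟪a, g ω - a⟫ + ‖a‖ ^ 2 := by rw [real_inner_comm]
    have hsqa : Integrable (fun ω => ‖g ω - a‖ ^ 2) μ :=
      (memLp_two_iff_integrable_sq_norm (hg2.sub (memLp_const a)).1).mp
        (hg2.sub (memLp_const a))
    have hinn : Integrable (fun ω => ⟪a, g ω - a⟫) μ := hgaint.const_inner _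
    calc ∫ ω, ‖g ω‖ ^ 2 ∂μ
        = ∫ ω, (‖g ω - a‖ ^ 2 + 2 * ⟪a, g ω - a⟫ + ‖a‖ ^ 2) ∂μ := by simp_rw [hpt2]
      _ = (∫ ω, ‖g ω - a‖ ^ 2 ∂μ) + 2 * (∫ ω, ⟪a, g ω - a⟫ ∂μ) + ‖a‖ ^ 2 := by
          have hj1 : Integrable (fun ω => 2 * ⟪a, g ω - a⟫) μ := hinn.const_mul _
          have hj2 : Integrable (fun ω => ‖g ω - a‖ ^ 2 + 2 * ⟪a, g ω - a⟫) μ := hsqa.add hj1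
          rw [integral_add hj2 (integrable_const _), integral_add hsqa hj1,
            integral_const_mul _ _, integral_const, probReal_univ]
          simp
      _ = (∫ ω, ‖g ω - a‖ ^ 2 ∂μ) + ‖a‖ ^ 2 := by
          rw [integral_inner hgaint, integral_sub hgint (integrable_const a), hmean,
            integral_const, probReal_univ]
          simp
      _ ≤ σ ^ 2 + ‖a‖ ^ 2 := by linarith [hvar]
  -- scalar bounds from the step-size assumption
  have hsqrt6 : (2:ℝ) ≤ Real.sqrt 6 := by
    rw [show (2:ℝ) = Real.sqrt 4 by
      rw [show (4:ℝ) = 2 ^ 2 by norm_num, Real.sqrt_sq (by norm_num : (0:ℝ) ≤ 2)]]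
    exact Real.sqrt_le_sqrt (by norm_num)
  have hs6pos : (0:ℝ) < Real.sqrt 6 := by positivity
  have hden : (0:ℝ) < Real.sqrt 6 * S * τ := by positivity
  have hkey : Real.sqrt 6 * S * τ * η ≤ 1 := by
    calc Real.sqrt 6 * S * τ * η ≤ Real.sqrt 6 * S * τ * (1 / (Real.sqrt 6 * S * τ)) :=
          mul_le_mul_of_nonneg_left hη hden.le
      _ = 1 := by field_simp
  have hprod : (0:ℝ) ≤ η * S * τ := by positivity
  have k1 : 2 * (η * S * (τ:ℝ)) ≤ 1 := by nlinarith
  have k2 : 6 * (η ^ 2 * S ^ 2 * (τ:ℝ) ^ 2) ≤ 1 := by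
    have h6 : Real.sqrt 6 ^ 2 = 6 := Real.sq_sqrt (by norm_num)
    nlinarith [hkey, sq_nonneg (Real.sqrt 6 * S * τ * η)]
  -- Cauchy-Schwarz pieces
  have hD : ‖a - b‖ ≤ S * ‖x - y‖ := hlip x y
  have hcs1 : -⟪x - y, a - b⟫ ≤ ‖x - y‖ * ‖a - b‖ := by
    have h := abs_real_inner_le_norm (x - y) (a - b)
    have h2 := neg_abs_le ⟪x - y, a - b⟫
    linarith
  have hcs2 : -⟪x - y, b⟫ ≤ ‖x - y‖ * ‖b‖ := by
    have h := abs_real_inner_le_norm (x - y) b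
    have h2 := neg_abs_le ⟪x - y, b⟫
    linarith
  have hnorma : ‖a‖ ≤ ‖a - b‖ + ‖b‖ := by
    calc ‖a‖ = ‖(a - b) + b‖ := by rw [sub_add_cancel]
      _ ≤ ‖a - b‖ + ‖b‖ := norm_add_le _ _
  have hsplit : ⟪x - y, a⟫ = ⟪x - y, a - b⟫ + ⟪x - y, b⟫ := by
    rw [inner_sub_right]; ring
  rw [hIeq, hsplit]
  exact stmt_5_aux (τ:ℝ) η S ‖x - y‖ ‖b‖ ‖a - b‖ ‖a‖ ⟪x - y, a - b⟫ ⟪x - y, b⟫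
    (∫ ω, ‖g ω‖ ^ 2 ∂μ) σ G ht1 hη0 hS (norm_nonneg _) (norm_nonneg _) (norm_nonneg _)
    (norm_nonneg _) hD hy hcs1 hcs2 hnorma hmom k1 k2
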